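/- The formula φ2 := ∀x∃y□(□□P(x,y)) ∧ ∀x□(□□¬P(x,x)) ∧ ∀x□∀y□∀z□((P(x,y)∧P(y,z))→P(x,z)) ∧ ◇◇◇⊤ is satisfiable in an increasing domain model with infinite domain D; moreover, for every increasing domain model M and world w, if M,w ⊨ φ2 then the local domain δ(w) is infinite. Hence every fragment of FOML that can express formulas of the form ∀x∃y□α lacks the finite model property over increasing domain models. -/

import Mathlib

set_option maxHeartbeats 1000000

/-! ## Syntax of first-order modal logic (FOML)

Predicate symbols and variables are represented by natural numbers; an atom
`atom p args` applies the predicate symbol `p` to the list of variables `args`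
(the arity of `p` in this occurrence is the length of `args`). -/
inductive Formula : Type where
  | atom (p : ℕ) (args : List ℕ)
  | neg  (φ : Formula)
  | and  (φ ψ : Formula)
  | or   (φ ψ : Formula)
  | box  (φ : Formula)
  | dia  (φ : Formula)
  | ex   (x : ℕ) (φ : Formula)
  | all  (x : ℕ) (φ : Formula)
deriving DecidableEq

namespace Formula

def imp (φ ψ : Formula) : Formula := .or φ.neg ψ
def biimp (φ ψ : Formula) : Formula := .and (imp φ ψ) (imp ψ φ)
/-- a fixed tautology `⊤` -/
def top : Formula := .or (.atom 0 []) (.neg (.atom 0 []))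
/-- a fixed contradiction `⊥` -/
def bot : Formula := .and (.atom 0 []) (.neg (.atom 0 []))

end Formula

def bigAnd (l : List Formula) : Formula := l.foldr Formula.and Formula.top
def bigOr  (l : List Formula) : Formula := l.foldr Formula.or Formula.bot

/-! ## Semantics: Kripke structures with world-relative domains -/

structure Model where
  W : Type
  D : Type
  R : W → W → Prop
  dom : W → Set D
  ρ : W → ℕ → Set (List D)

/-- `M` is an increasing domain model: nonempty countable set of worlds, nonempty
countable domain, nonempty local domains that increase along the accessibility
relation, and interpretations of predicates at a world take values in the local
domain of that world. -/
def Model.Increasing (M : Model) : Prop :=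
  Nonempty M.W ∧ Nonempty M.D ∧ Countable M.W ∧ Countable M.D ∧
    (∀ w, (M.dom w).Nonempty) ∧
    (∀ w v, M.R w v → M.dom w ⊆ M.dom v) ∧
    (∀ w p l, l ∈ M.ρ w p → ∀ d ∈ l, d ∈ M.dom w)

def Model.sat (M : Model) : M.W → (ℕ → M.D) → Formula → Prop
  | w, σ, .atom p args => args.map σ ∈ M.ρ w p
  | w, σ, .neg φ => ¬ M.sat w σ φ
  | w, σ, .and φ ψ => M.sat w σ φ ∧ M.sat w σ ψ
  | w, σ, .or φ ψ => M.sat w σ φ ∨ M.sat w σ ψ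
  | w, σ, .box φ => ∀ v, M.R w v → M.sat v σ φ
  | w, σ, .dia φ => ∃ v, M.R w v ∧ M.sat v σ φ
  | w, σ, .ex x φ => ∃ d ∈ M.dom w, M.sat w (Function.update σ x d) φ
  | w, σ, .all x φ => ∀ d ∈ M.dom w, M.sat w (Function.update σ x d) φ

/-- the assignment `σ` is relevant at the world `w` -/
def Model.relevant (M : Model) (w : M.W) (σ : ℕ → M.D) : Prop := ∀ x, σ x ∈ M.dom w

/-- satisfiability over increasing domain models -/
def Satisfiable (φ : Formula) : Prop :=
  ∃ (M : Model), M.Increasing ∧ ∃ (w : M.W) (σ : ℕ → M.D), M.relevant w σ ∧ M.sat w σ φ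

/-- the binary predicate `P` -/
def atomP (x y : ℕ) : Formula := .atom 0 [x, y]

/-- `φ2 := ∀x∃y□(□□P(x,y)) ∧ ∀x□(□□¬P(x,x)) ∧
∀x□∀y□∀z□((P(x,y) ∧ P(y,z)) → P(x,z)) ∧ ◇◇◇⊤`,
with variables `x := 0`, `y := 1`, `z := 2`. -/
def phi2 : Formula :=
  .and (.all 0 (.ex 1 (.box (.box (.box (atomP 0 1))))))
    (.and (.all 0 (.box (.box (.box (.neg (atomP 0 0))))))
      (.and (.all 0 (.box (.all 1 (.box (.all 2 (.box
          (Formula.imp (.and (atomP 0 1) (atomP 1 2)) (atomP 0 2))))))))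
        (.dia (.dia (.dia Formula.top)))))

/-- The formula `φ2` (which only uses quantification of the
form `∀x∃y□α`, `∀x□α` and `□α`) is satisfiable in an increasing domain model
with infinite domain; moreover, in every increasing domain model, the local
domain of every world satisfying `φ2` is infinite.  Hence every fragment of
FOML that can express `∀x∃y□α` lacks the finite model property over increasing
domain models. -/
theorem forall_exists_box_no_fmp :
    (∃ M : Model, M.Increasing ∧ Infinite M.D ∧
      ∃ (w : M.W) (σ : ℕ → M.D), M.relevant w σ ∧ M.sat w σ phi2) ∧
    (∀ M : Model, M.Increasing →
      ∀ (w : M.W) (σ : ℕ → M.D), M.relevant w σ → M.sat w σ phi2 →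
        (M.dom w).Infinite) := by
  constructor
  · -- satisfiability with infinite domain
    refine ⟨⟨Unit, ℕ, fun _ _ => True, fun _ => Set.univ,
        fun _ _ => {l | ∃ a b : ℕ, l = [a, b] ∧ a < b}⟩,
      ⟨⟨()⟩, ⟨0⟩, inferInstance, inferInstance, fun _ => ⟨0, trivial⟩,
        fun _ _ _ => le_refl _, fun _ _ _ _ _ _ => trivial⟩,
      inferInstance, (), (fun _ => 0), fun _ => trivial, ?_⟩
    refine ⟨?_, ?_, ?_, ?_⟩
    · intro d _
      refine ⟨d + 1, trivial, ?_⟩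
      intro v _ v2 _ v3 _
      simp [Model.sat, atomP, Function.update]
    · intro d _
      intro v _ v2 _ v3 _
      simp [Model.sat, atomP, Function.update]
    · intro d _ v _ e _ v2 _ f _ v3 _
      simp [Formula.imp, Model.sat, atomP, Function.update]
      rcases Nat.lt_or_ge d e with h1 | h1
      · rcases Nat.lt_or_ge e f with h2 | h2
        · exact Or.inr (h1.trans h2)
        · exact Or.inl fun _ => h2
      · exact Or.inl fun h => absurd h (Nat.not_lt.mpr h1)
    · exact ⟨(), trivial, (), trivial, (), trivial, Or.inr (by simp [Model.sat, Formula.top])⟩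
  · intro M hM w σ hrel hsat
    obtain ⟨_, _, _, _, hdomne, hmono, _⟩ := hM
    obtain ⟨h1, h2, h3, h4⟩ := hsat
    obtain ⟨v1, hr1, v2, hr2, v3, hr3, -⟩ := h4
    -- the strict relation at v3
    set Q : M.D → M.D → Prop := fun a b => [a, b] ∈ M.ρ v3 0 with hQ
    have hsucc : ∀ d ∈ M.dom w, ∃ e ∈ M.dom w, Q d e := by
      intro d hd
      obtain ⟨e, he, hbox⟩ := h1 d hd
      refine ⟨e, he, ?_⟩
      have := hbox v1 hr1 v2 hr2 v3 hr3
      simpa [Model.sat, atomP, Function.update] using this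
    have hirr : ∀ d ∈ M.dom w, ¬ Q d d := by
      intro d hd
      have := h2 d hd v1 hr1 v2 hr2 v3 hr3
      simpa [Model.sat, atomP, Function.update] using this
    have htrans : ∀ d ∈ M.dom w, ∀ e ∈ M.dom w, ∀ f ∈ M.dom w,
        Q d e → Q e f → Q d f := by
      intro d hd e he f hf hde hef
      have h := h3 d hd v1 hr1 e (hmono w v1 hr1 he) v2 hr2 f
        (hmono v1 v2 hr2 (hmono w v1 hr1 hf)) v3 hr3
      simp [Formula.imp, Model.sat, atomP, Function.update] at h
      rcases h with h | h
      · exact absurd hef (h hde)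
      · exact h
    -- build an injective sequence
    obtain ⟨d0, hd0⟩ := hdomne w
    have next : ∀ a : {d // d ∈ M.dom w}, ∃ b : {d // d ∈ M.dom w}, Q a.1 b.1 := by
      rintro ⟨a, ha⟩
      obtain ⟨e, he, hQe⟩ := hsucc a ha
      exact ⟨⟨e, he⟩, hQe⟩
    choose f hf using next
    set g : ℕ → {d // d ∈ M.dom w} := fun n => f^[n] ⟨d0, hd0⟩ with hg
    have hstep : ∀ n, Q (g n).1 (g (n+1)).1 := by
      intro n
      have : g (n+1) = f (g n) := by
        simp [hg, Function.iterate_succ_apply']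
      rw [this]
      exact hf (g n)
    have hlt : ∀ m n, m < n → Q (g m).1 (g n).1 := by
      intro m n hmn
      induction n with
      | zero => omega
      | succ k ih =>
        rcases Nat.lt_succ_iff_lt_or_eq.mp hmn with h | h
        · exact htrans _ (g m).2 _ (g k).2 _ (g (k+1)).2 (ih h) (hstep k)
        · subst h; exact hstep m
    have hinj : Function.Injective fun n => (g n).1 := by
      intro m n hmn
      by_contra hne
      have hmn' : (g m).1 = (g n).1 := hmn
      rcases Nat.lt_or_ge m n with h | h
      · have hq := hlt m n h
        rw [hmn'] at hq
        exact hirr _ (g n).2 hq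
      · have h' : n < m := lt_of_le_of_ne h (Ne.symm hne)
        have hq := hlt n m h'
        rw [hmn'] at hq
        exact hirr _ (g n).2 hq
    exact Set.infinite_of_injective_forall_mem hinj (fun n => (g n).2)
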